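/- Let L₁ and L₂ be two distinct rooted trees each with ℓ vertices. For a rooted tree T and vertex v, the maximal limb at v is the rooted subtree consisting of v and all of its descendants. Then for every n, the number of n-vertex rooted trees not containing L₁ as a maximal limb equals the number of n-vertex rooted trees not containing L₂ as a maximal limb. -/

import Mathlib

/-- A rooted tree: a root together with a list of rooted subtrees
(the list order is quotiented out by `Iso` below). -/
inductive RTree : Type
  | node : List RTree → RTree

mutual
  /-- The number of vertices of a rooted tree. -/
  def RTree.size : RTree → ℕ
    | .node c => 1 + RTree.sizeList c
  def RTree.sizeList : List RTree → ℕ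
    | [] => 0
    | t :: ts => RTree.size t + RTree.sizeList ts
end

mutual
  /-- Isomorphism of rooted trees: the children correspond up to isomorphism
  and permutation. -/
  inductive RTree.Iso : RTree → RTree → Prop
    | node (c c' l : List RTree) :
        l.Perm c' → RTree.IsoList c l → RTree.Iso (.node c) (.node c')
  inductive RTree.IsoList : List RTree → List RTree → Prop
    | nil : RTree.IsoList [] []
    | cons {t t' : RTree} {ts ts' : List RTree} :
        RTree.Iso t t' → RTree.IsoList ts ts' → RTree.IsoList (t :: ts) (t' :: ts')
end

/-- `HasMaxLimb T L` says that the rooted tree `T` contains `L` as a maximal limb: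
the full subtree rooted at some vertex of `T` (that vertex together with all of its
descendants) is isomorphic to `L`. -/
inductive HasMaxLimb : RTree → RTree → Prop
  | here (t L : RTree) : RTree.Iso t L → HasMaxLimb t L
  | child (c : List RTree) (t L : RTree) :
      t ∈ c → HasMaxLimb t L → HasMaxLimb (.node c) L

namespace RTree

lemma size_pos : ∀ t : RTree, 0 < t.size
  | .node _ => by rw [size]; omega

lemma size_le_of_mem : ∀ {c : List RTree} {t : RTree}, t ∈ c → t.size ≤ sizeList c
  | t' :: ts, t, h => by
    rcases List.mem_cons.1 h with h | h
    · subst h; rw [sizeList]; omega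
    · have := size_le_of_mem (c := ts) h; rw [sizeList]; omega

lemma size_lt_of_mem {c : List RTree} {t : RTree} (h : t ∈ c) :
    t.size < (RTree.node c).size := by
  have := size_le_of_mem h; rw [size]; omega

lemma length_le_sizeList : ∀ c : List RTree, c.length ≤ sizeList c
  | [] => le_refl _
  | t :: ts => by
    have := length_le_sizeList ts
    have := size_pos t
    rw [sizeList]; simp only [List.length_cons]; omega

lemma sizeList_eq_sum : ∀ c : List RTree, sizeList c = (c.map size).sum
  | [] => rfl
  | t :: ts => by rw [sizeList, sizeList_eq_sum ts]; simp

lemma forall₂_of_isoList : ∀ (l₁ : List RTree) {l₂}, IsoList l₁ l₂ → List.Forall₂ Iso l₁ l₂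
  | [], _, h => by cases h; exact .nil
  | t :: ts, _, h => by
    cases h with
    | cons h1 h2 => exact .cons h1 (forall₂_of_isoList ts h2)

lemma isoList_of_forall₂ : ∀ {l₁ l₂ : List RTree}, List.Forall₂ Iso l₁ l₂ → IsoList l₁ l₂
  | _, _, .nil => .nil
  | _, _, .cons h hs => .cons h (isoList_of_forall₂ hs)

lemma iso_node_iff {c c' : List RTree} :
    Iso (.node c) (.node c') ↔ ∃ l, l.Perm c' ∧ List.Forall₂ Iso c l := by
  constructor
  · rintro ⟨_, _, l, hp, hl⟩; exact ⟨l, hp, forall₂_of_isoList _ hl⟩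
  · rintro ⟨l, hp, hl⟩; exact .node c c' l hp (isoList_of_forall₂ hl)

lemma forall₂_flip_aux : ∀ {c l : List RTree},
    (∀ x ∈ c, ∀ y, Iso x y → Iso y x) → List.Forall₂ Iso c l → List.Forall₂ Iso l c
  | _, _, _, .nil => .nil
  | _, _, H, .cons h hs =>
    .cons (H _ (List.mem_cons_self) _ h)
      (forall₂_flip_aux (fun x hx => H x (List.mem_cons_of_mem _ hx)) hs)

lemma forall₂_trans_aux : ∀ {a b c : List RTree},
    (∀ y ∈ b, ∀ x z, Iso x y → Iso y z → Iso x z) →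
    List.Forall₂ Iso a b → List.Forall₂ Iso b c → List.Forall₂ Iso a c
  | _, _, _, _, .nil, h2 => by cases h2; exact .nil
  | _, _, _, H, .cons h1 hs1, h2 => by
    cases h2 with
    | cons h2' hs2 =>
      exact .cons (H _ (List.mem_cons_self) _ _ h1 h2')
        (forall₂_trans_aux (fun y hy => H y (List.mem_cons_of_mem _ hy)) hs1 hs2)

lemma iso_refl (t : RTree) : Iso t t := by
  suffices hh : ∀ n (t : RTree), t.size ≤ n → Iso t t from hh t.size t le_rfl
  intro n
  induction n with
  | zero => intro t ht; have := size_pos t; omega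
  | succ n ih =>
    rintro ⟨c⟩ ht
    exact iso_node_iff.2 ⟨c, List.Perm.refl c,
      List.forall₂_same.2 fun x hx => ih x (by have := size_lt_of_mem hx; omega)⟩

lemma iso_symm {a b : RTree} (h : Iso a b) : Iso b a := by
  suffices hh : ∀ n (a b : RTree), a.size ≤ n → Iso a b → Iso b a from hh a.size a b le_rfl h
  clear h a b
  intro n
  induction n with
  | zero => intro a b ha; have := size_pos a; omega
  | succ n ih =>
    rintro ⟨c⟩ ⟨c'⟩ ha h
    rcases iso_node_iff.1 h with ⟨l, hp, hf⟩
    have hflip : List.Forall₂ Iso l c :=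
      forall₂_flip_aux (fun x hx y hxy => ih x y (by have := size_lt_of_mem hx; omega) hxy) hf
    rcases List.perm_comp_forall₂ hp.symm hflip with ⟨m, hm, hmp⟩
    exact iso_node_iff.2 ⟨m, hmp, hm⟩

lemma iso_trans {a b c : RTree} (h1 : Iso a b) (h2 : Iso b c) : Iso a c := by
  suffices hh : ∀ n (b : RTree), b.size ≤ n → ∀ a c, Iso a b → Iso b c → Iso a c from
    hh b.size b le_rfl a c h1 h2
  clear h1 h2 a b c
  intro n
  induction n with
  | zero => intro b hb; have := size_pos b; omega
  | succ n ih =>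
    rintro ⟨cb⟩ hb ⟨ca⟩ ⟨cc⟩ h1 h2
    rcases iso_node_iff.1 h1 with ⟨l1, hp1, hf1⟩
    rcases iso_node_iff.1 h2 with ⟨l2, hp2, hf2⟩
    rcases List.perm_comp_forall₂ hp1 hf2 with ⟨w, hw, hwp⟩
    have hf : List.Forall₂ Iso ca w :=
      forall₂_trans_aux
        (fun y hy x z hxy hyz => ih y (by
            have := size_lt_of_mem ((hp1.mem_iff).1 hy); omega) x z hxy hyz)
        hf1 hw
    exact iso_node_iff.2 ⟨w, hwp.trans hp2, hf⟩

lemma forall₂_map_size : ∀ {c l : List RTree},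
    (∀ x ∈ c, ∀ y, Iso x y → x.size = y.size) → List.Forall₂ Iso c l →
    c.map size = l.map size
  | _, _, _, .nil => rfl
  | _, _, H, .cons h hs => by
    simp only [List.map_cons]
    rw [H _ (List.mem_cons_self) _ h,
      forall₂_map_size (fun x hx => H x (List.mem_cons_of_mem _ hx)) hs]

lemma iso_size_eq {a b : RTree} (h : Iso a b) : a.size = b.size := by
  suffices hh : ∀ n (a b : RTree), a.size ≤ n → Iso a b → a.size = b.size from
    hh a.size a b le_rfl h
  clear h a b
  intro n
  induction n with
  | zero => intro a b ha; have := size_pos a; omega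
  | succ n ih =>
    rintro ⟨c⟩ ⟨c'⟩ ha h
    rcases iso_node_iff.1 h with ⟨l, hp, hf⟩
    have h1 : sizeList c = sizeList l := by
      rw [sizeList_eq_sum, sizeList_eq_sum]
      congr 1
      exact forall₂_map_size
        (fun x hx y hxy => ih x y (by have := size_lt_of_mem hx; omega) hxy) hf
    have h2 : sizeList l = sizeList c' := by
      rw [sizeList_eq_sum, sizeList_eq_sum]
      exact (hp.map size).sum_eq
    rw [size, size, h1, h2]

instance isoSetoid : Setoid RTree := ⟨Iso, iso_refl, iso_symm, iso_trans⟩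

lemma forall₂_mem_left : ∀ {c l : List RTree}, List.Forall₂ Iso c l → ∀ {x}, x ∈ c →
    ∃ y ∈ l, Iso x y
  | _, _, .cons h hs, x, hx => by
    rcases List.mem_cons.1 hx with rfl | hx
    · exact ⟨_, List.mem_cons_self, h⟩
    · rcases forall₂_mem_left hs hx with ⟨y, hy, hxy⟩
      exact ⟨y, List.mem_cons_of_mem _ hy, hxy⟩

end RTree

open RTree


lemma hasMaxLimb_self (L : RTree) : HasMaxLimb L L := .here L L (iso_refl L)

lemma size_le_of_hasMaxLimb {t L : RTree} (h : HasMaxLimb t L) : L.size ≤ t.size := by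
  induction h with
  | here t L h => exact (iso_size_eq h).symm.le
  | child c x L hx _ ih => exact ih.trans (size_lt_of_mem hx).le

lemma hasMaxLimb_congr {t t' L : RTree} (ht : Iso t t') (h : HasMaxLimb t L) :
    HasMaxLimb t' L := by
  induction h generalizing t' with
  | here t L h => exact .here t' L (iso_trans (iso_symm ht) h)
  | child c x L hx _ ih =>
    rcases t' with ⟨c'⟩
    rcases iso_node_iff.1 ht with ⟨l, hp, hf⟩
    rcases forall₂_mem_left hf hx with ⟨y, hy, hxy⟩
    exact .child c' y L (hp.mem_iff.1 hy) (ih hxy)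

lemma hasMaxLimb_node_iff {c : List RTree} {L : RTree} :
    HasMaxLimb (.node c) L ↔ Iso (.node c) L ∨ ∃ x ∈ c, HasMaxLimb x L := by
  constructor
  · intro h
    cases h with
    | here _ _ h => exact Or.inl h
    | child _ x _ hx h => exact Or.inr ⟨x, hx, h⟩
  · rintro (h | ⟨x, hx, h⟩)
    · exact .here _ _ h
    · exact .child _ x _ hx h

instance finite_size_le : ∀ n : ℕ, Finite {t : RTree // t.size ≤ n}
  | 0 =>
    haveI : IsEmpty {t : RTree // t.size ≤ 0} := ⟨fun x => by have := size_pos x.1; omega⟩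
    inferInstance
  | n + 1 => by
    haveI := finite_size_le n
    haveI : Finite {l : List {t : RTree // t.size ≤ n} // l.length ≤ n} :=
      (List.finite_length_le _ n).to_subtype
    set f : {t : RTree // t.size ≤ n + 1} → {l : List {t : RTree // t.size ≤ n} // l.length ≤ n} :=
      fun x => match x with
      | ⟨.node c, h⟩ =>
        ⟨c.attach.map (fun y => (⟨y.1, by
            have := size_le_of_mem y.2; rw [size] at h; omega⟩ : {t : RTree // t.size ≤ n})),
         by
          have h1 := length_le_sizeList c
          rw [size] at h
          simpa using by omega⟩
      with hf
    refine Finite.of_injective f ?_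
    rintro ⟨⟨c⟩, h⟩ ⟨⟨c'⟩, h'⟩ heq
    have := congrArg (fun l => l.1.map Subtype.val) heq
    simp only [hf, List.map_map] at this
    simp only [Function.comp_def, List.map_subtype, List.unattach_attach, List.map_id'] at this
    exact Subtype.ext (congrArg RTree.node this)

instance finite_size_eq (n : ℕ) : Finite {t : RTree // t.size = n} := by
  refine Finite.of_injective (fun x => (⟨x.1, x.2.le⟩ : {t : RTree // t.size ≤ n})) ?_
  intro a b h
  simpa [Subtype.ext_iff] using h

open RTree

abbrev Q := Quotient RTree.isoSetoid

lemma mk_eq_mk_of_iso {a b : RTree} (h : Iso a b) : (⟦a⟧ : Q) = ⟦b⟧ := Quotient.sound h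

def sizeQ : Q → ℕ := Quotient.lift RTree.size (fun _ _ h => iso_size_eq h)

@[simp] lemma sizeQ_mk (t : RTree) : sizeQ (⟦t⟧ : Q) = t.size := rfl

lemma sizeQ_pos (q : Q) : 0 < sizeQ q := by
  induction q using Quotient.ind with
  | _ t => exact size_pos t

lemma forall₂_map_mk {c l : List RTree} (h : List.Forall₂ Iso c l) :
    c.map (fun x => (⟦x⟧ : Q)) = l.map (fun x => (⟦x⟧ : Q)) := by
  induction h with
  | nil => rfl
  | cons h _ ih => simp only [List.map_cons, ih, mk_eq_mk_of_iso h]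

def childrenQ : Q → Multiset Q :=
  Quotient.lift (fun t => match t with
    | .node c => ((c.map (fun x => (⟦x⟧ : Q)) : List Q) : Multiset Q))
    (by
      rintro ⟨c⟩ ⟨c'⟩ h
      rcases iso_node_iff.1 h with ⟨l, hp, hf⟩
      show ((c.map _ : List Q) : Multiset Q) = _
      rw [forall₂_map_mk hf]
      exact Multiset.coe_eq_coe.2 (hp.map _))

@[simp] lemma childrenQ_mk (c : List RTree) :
    childrenQ (⟦.node c⟧ : Q) = ((c.map (fun x => (⟦x⟧ : Q)) : List Q) : Multiset Q) := rfl

lemma perm_map_mk : ∀ (l₁ : List RTree) {l₂ : List RTree},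
    (l₁.map (fun x => (⟦x⟧ : Q))).Perm (l₂.map (fun x => (⟦x⟧ : Q))) →
    ∃ l, l.Perm l₂ ∧ List.Forall₂ Iso l₁ l
  | [], l₂, h => by
    have : l₂.map (fun x => (⟦x⟧ : Q)) = [] := (h.symm).eq_nil
    rcases List.map_eq_nil_iff.1 this with rfl
    exact ⟨[], List.Perm.refl _, .nil⟩
  | x :: t, l₂, h => by
    have hx : (⟦x⟧ : Q) ∈ l₂.map (fun x => (⟦x⟧ : Q)) := h.mem_iff.1 (by simp)
    rcases List.mem_map.1 hx with ⟨y, hy, hyx⟩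
    rcases List.append_of_mem hy with ⟨u, v, rfl⟩
    have hperm2 : ((u ++ y :: v).map (fun x => (⟦x⟧ : Q))).Perm
        ((⟦y⟧ : Q) :: (u ++ v).map (fun x => (⟦x⟧ : Q))) := by
      simp only [List.map_append, List.map_cons]
      exact List.perm_middle
    have h3 : ((⟦x⟧ : Q) :: t.map (fun x => (⟦x⟧ : Q))).Perm
        ((⟦y⟧ : Q) :: (u ++ v).map (fun x => (⟦x⟧ : Q))) := by
      simpa using h.trans hperm2
    rw [← hyx] at h3
    have h4 := h3.cons_inv
    rcases perm_map_mk t h4 with ⟨l, hl, hf⟩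
    refine ⟨y :: l, ?_, .cons (Quotient.exact hyx.symm) hf⟩
    exact (hl.cons y).trans List.perm_middle.symm

lemma childrenQ_injective : Function.Injective childrenQ := by
  rintro q q' h
  induction q using Quotient.ind with | _ a =>
  induction q' using Quotient.ind with | _ b =>
  rcases a with ⟨c⟩; rcases b with ⟨c'⟩
  simp only [childrenQ_mk, Multiset.coe_eq_coe] at h
  rcases perm_map_mk c h with ⟨l, hl, hf⟩
  exact Quotient.sound (iso_node_iff.2 ⟨l, hl, hf⟩)

lemma childrenQ_surjective : Function.Surjective childrenQ := by
  intro m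
  refine ⟨(⟦.node (m.toList.map Quotient.out)⟧ : Q), ?_⟩
  simp only [childrenQ_mk, List.map_map]
  have h1 : ((fun x => (⟦x⟧ : Q)) ∘ Quotient.out) = id := by
    funext q; simp [Quotient.out_eq]
  rw [h1, List.map_id, Multiset.coe_toList]

noncomputable def nodeEquiv : Q ≃ Multiset Q :=
  Equiv.ofBijective childrenQ ⟨childrenQ_injective, childrenQ_surjective⟩

@[simp] lemma nodeEquiv_apply (q : Q) : nodeEquiv q = childrenQ q := rfl

@[simp] lemma childrenQ_nodeEquiv_symm (m : Multiset Q) : childrenQ (nodeEquiv.symm m) = m :=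
  nodeEquiv.apply_symm_apply m

lemma sizeQ_eq_children (q : Q) : sizeQ q = 1 + ((childrenQ q).map sizeQ).sum := by
  induction q using Quotient.ind with | _ a =>
  rcases a with ⟨c⟩
  simp only [sizeQ_mk, childrenQ_mk, Multiset.map_coe, Multiset.sum_coe, List.map_map]
  rw [size, sizeList_eq_sum]
  congr 1

lemma mem_childrenQ {c : List RTree} {r : Q} :
    r ∈ childrenQ (⟦.node c⟧ : Q) ↔ ∃ x ∈ c, (⟦x⟧ : Q) = r := by
  simp [childrenQ_mk]

lemma sizeQ_lt_of_mem_childrenQ {q r : Q} (h : r ∈ childrenQ q) : sizeQ r < sizeQ q := by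
  induction q using Quotient.ind with | _ a =>
  rcases a with ⟨c⟩
  rcases mem_childrenQ.1 h with ⟨x, hx, rfl⟩
  simpa using size_lt_of_mem hx

def avoidQ (L : RTree) : Q → Prop :=
  Quotient.lift (fun t => ¬ HasMaxLimb t L)
    (fun a b h => propext ⟨fun hn hb => hn (hasMaxLimb_congr (iso_symm h) hb),
      fun hn ha => hn (hasMaxLimb_congr h ha)⟩)

@[simp] lemma avoidQ_mk (L t : RTree) : avoidQ L (⟦t⟧ : Q) ↔ ¬ HasMaxLimb t L := Iff.rfl

lemma avoidQ_iff (L : RTree) (q : Q) :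
    avoidQ L q ↔ q ≠ (⟦L⟧ : Q) ∧ ∀ r ∈ childrenQ q, avoidQ L r := by
  induction q using Quotient.ind with | _ a =>
  rcases a with ⟨c⟩
  constructor
  · intro h
    refine ⟨fun he => h (hasMaxLimb_congr (iso_symm (Quotient.exact he)) (hasMaxLimb_self L)),
      fun r hr => ?_⟩
    rcases mem_childrenQ.1 hr with ⟨x, hx, rfl⟩
    exact fun hax => h (.child c x L hx hax)
  · rintro ⟨hne, hch⟩ h
    rcases hasMaxLimb_node_iff.1 h with h | ⟨x, hx, h⟩
    · exact hne (Quotient.sound h)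
    · exact hch (⟦x⟧ : Q) (mem_childrenQ.2 ⟨x, hx, rfl⟩) h

lemma not_avoidQ_self (L : RTree) : ¬ avoidQ L (⟦L⟧ : Q) := fun h => h (hasMaxLimb_self L)

lemma children_of_L_avoid (L : RTree) : ∀ r ∈ childrenQ (⟦L⟧ : Q), avoidQ L r := by
  rcases L with ⟨c⟩
  intro r hr
  rcases mem_childrenQ.1 hr with ⟨x, hx, rfl⟩
  intro h
  have h1 := size_le_of_hasMaxLimb h
  have h2 := size_lt_of_mem hx
  omega

instance finiteQ_size (n : ℕ) : Finite {q : Q // sizeQ q = n} := by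
  refine Finite.of_surjective
    (fun t : {t : RTree // t.size = n} => (⟨⟦t.1⟧, t.2⟩ : {q : Q // sizeQ q = n})) ?_
  rintro ⟨q, hq⟩
  induction q using Quotient.ind with | _ a =>
  exact ⟨⟨a, hq⟩, rfl⟩

instance finiteQ_size_and (n : ℕ) (P : Q → Prop) : Finite {q : Q // sizeQ q = n ∧ P q} := by
  refine Finite.of_injective
    (fun x : {q : Q // sizeQ q = n ∧ P q} => (⟨x.1, x.2.1⟩ : {q : Q // sizeQ q = n})) ?_
  intro a b h
  simpa [Subtype.ext_iff] using h

def msAttach {p : Q → Prop} (m : Multiset Q) (h : ∀ x ∈ m, p x) : Multiset {x : Q // p x} :=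
  m.attach.map (fun x => ⟨x.1, h x.1 x.2⟩)

@[simp] lemma msAttach_map_val {p : Q → Prop} (m : Multiset Q) (h : ∀ x ∈ m, p x) :
    (msAttach m h).map Subtype.val = m := by
  simp [msAttach, Multiset.map_map, Function.comp_def]

lemma msAttach_map {β : Type*} {p : Q → Prop} (m : Multiset Q) (h : ∀ x ∈ m, p x) (g : Q → β) :
    (msAttach m h).map (fun x => g x.1) = m.map g := by
  have : (fun x : {x : Q // p x} => g x.1) = g ∘ Subtype.val := rfl
  rw [this, ← Multiset.map_map, msAttach_map_val]

noncomputable def childEquiv (L : RTree) (n : ℕ) (hn : n ≠ 0) :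
    {q : Q // sizeQ q = n ∧ ∀ r ∈ childrenQ q, avoidQ L r} ≃
    {s : Multiset {q : Q // avoidQ L q ∧ sizeQ q < n} //
      (s.map (fun x => sizeQ x.1)).sum = n - 1} where
  toFun q := ⟨msAttach (childrenQ q.1)
      (fun r hr => ⟨q.2.2 r hr, q.2.1 ▸ sizeQ_lt_of_mem_childrenQ hr⟩), by
    rw [msAttach_map]
    have h := sizeQ_eq_children q.1
    rw [q.2.1] at h
    omega⟩
  invFun s := ⟨nodeEquiv.symm (s.1.map Subtype.val), by
    constructor
    · rw [sizeQ_eq_children (nodeEquiv.symm (s.1.map Subtype.val)), childrenQ_nodeEquiv_symm,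
        Multiset.map_map]
      have h := s.2
      have : (sizeQ ∘ Subtype.val) = (fun x : {q : Q // avoidQ L q ∧ sizeQ q < n} => sizeQ x.1) :=
        rfl
      rw [this, h]
      omega
    · intro r hr
      rw [childrenQ_nodeEquiv_symm] at hr
      rcases Multiset.mem_map.1 hr with ⟨x, _, rfl⟩
      exact x.2.1⟩
  left_inv q := by
    apply Subtype.ext
    dsimp only
    rw [msAttach_map_val]
    exact nodeEquiv.symm_apply_apply q.1
  right_inv s := by
    apply Subtype.ext
    apply Multiset.map_injective (Subtype.val_injective)
    dsimp only
    rw [msAttach_map_val, childrenQ_nodeEquiv_symm]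

def fiberEquiv (L : RTree) (n : ℕ) (k : Fin n) :
    {x : {q : Q // avoidQ L q ∧ sizeQ q < n} //
      (⟨sizeQ x.1, x.2.2⟩ : Fin n) = k} ≃ {q : Q // sizeQ q = (k : ℕ) ∧ avoidQ L q} where
  toFun x := ⟨x.1.1, congrArg Fin.val x.2, x.1.2.1⟩
  invFun q := ⟨⟨q.1, q.2.2, by rw [q.2.1]; exact k.2⟩, by
    apply Fin.eq_of_val_eq; exact q.2.1⟩
  left_inv x := Subtype.ext (Subtype.ext rfl)
  right_inv q := Subtype.ext rfl

lemma card_avoid_step (L : RTree) (n : ℕ) :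
    Nat.card {q : Q // sizeQ q = n ∧ ∀ r ∈ childrenQ q, avoidQ L r}
      = Nat.card {q : Q // sizeQ q = n ∧ avoidQ L q} + (if n = L.size then 1 else 0) := by
  by_cases hn : n = L.size
  · rw [if_pos hn]
    let f : Option {q : Q // sizeQ q = n ∧ avoidQ L q} →
        {q : Q // sizeQ q = n ∧ ∀ r ∈ childrenQ q, avoidQ L r} := fun o =>
      o.elim ⟨(⟦L⟧ : Q), by simpa using hn.symm, children_of_L_avoid L⟩
        (fun a => ⟨a.1, a.2.1, fun r hr => ((avoidQ_iff L a.1).1 a.2.2).2 r hr⟩)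
    have hbij : Function.Bijective f := by
      constructor
      · rintro (_ | a) (_ | b) h
        · rfl
        · exfalso
          have hv : (⟦L⟧ : Q) = b.1 := congrArg Subtype.val h
          exact not_avoidQ_self L (hv ▸ b.2.2)
        · exfalso
          have hv : a.1 = (⟦L⟧ : Q) := congrArg Subtype.val h
          exact not_avoidQ_self L (hv ▸ a.2.2)
        · have hv := congrArg Subtype.val h
          exact congrArg some (Subtype.ext hv)
      · rintro ⟨q, hq1, hq2⟩
        by_cases hL : q = (⟦L⟧ : Q)
        · exact ⟨none, Subtype.ext hL.symm⟩
        · exact ⟨some ⟨q, hq1, (avoidQ_iff L q).2 ⟨hL, hq2⟩⟩, rfl⟩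
    rw [← Nat.card_congr (Equiv.ofBijective f hbij), Finite.card_option]
  · rw [if_neg hn, Nat.add_zero]
    refine Nat.card_congr (Equiv.subtypeEquivRight fun q => ?_)
    constructor
    · rintro ⟨hs, hch⟩
      refine ⟨hs, (avoidQ_iff L q).2 ⟨fun he => hn ?_, hch⟩⟩
      rw [← hs, he]; simp
    · rintro ⟨hs, ha⟩
      exact ⟨hs, ((avoidQ_iff L q).1 ha).2⟩

lemma card_children_eq (L₁ L₂ : RTree) (n : ℕ)
    (IH : ∀ k, k < n → Nat.card {q : Q // sizeQ q = k ∧ avoidQ L₁ q}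
      = Nat.card {q : Q // sizeQ q = k ∧ avoidQ L₂ q}) :
    Nat.card {q : Q // sizeQ q = n ∧ ∀ r ∈ childrenQ q, avoidQ L₁ r}
      = Nat.card {q : Q // sizeQ q = n ∧ ∀ r ∈ childrenQ q, avoidQ L₂ r} := by
  rcases Nat.eq_zero_or_pos n with rfl | hn
  · haveI h1 : IsEmpty {q : Q // sizeQ q = 0 ∧ ∀ r ∈ childrenQ q, avoidQ L₁ r} :=
      ⟨fun x => by have := sizeQ_pos x.1; omega⟩
    haveI h2 : IsEmpty {q : Q // sizeQ q = 0 ∧ ∀ r ∈ childrenQ q, avoidQ L₂ r} :=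
      ⟨fun x => by have := sizeQ_pos x.1; omega⟩
    simp [Nat.card_of_isEmpty]
  · have hn' : n ≠ 0 := hn.ne'
    -- fiberwise equivalences from IH
    have hA : ∀ k : Fin n, Nonempty ({q : Q // sizeQ q = (k : ℕ) ∧ avoidQ L₁ q}
        ≃ {q : Q // sizeQ q = (k : ℕ) ∧ avoidQ L₂ q}) := by
      intro k
      have h := IH k k.2
      haveI := Fintype.ofFinite {q : Q // sizeQ q = (k : ℕ) ∧ avoidQ L₁ q}
      haveI := Fintype.ofFinite {q : Q // sizeQ q = (k : ℕ) ∧ avoidQ L₂ q}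
      rw [Nat.card_eq_fintype_card, Nat.card_eq_fintype_card] at h
      exact ⟨Fintype.equivOfCardEq h⟩
    set S₁ := {q : Q // avoidQ L₁ q ∧ sizeQ q < n} with hS₁
    set S₂ := {q : Q // avoidQ L₂ q ∧ sizeQ q < n} with hS₂
    set fs₁ : S₁ → Fin n := fun x => ⟨sizeQ x.1, x.2.2⟩ with hfs₁
    set fs₂ : S₂ → Fin n := fun x => ⟨sizeQ x.1, x.2.2⟩ with hfs₂
    let g : ∀ k : Fin n, {x : S₁ // fs₁ x = k} ≃ {x : S₂ // fs₂ x = k} := fun k =>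
      (fiberEquiv L₁ n k).trans ((hA k).some.trans (fiberEquiv L₂ n k).symm)
    let ψ : S₁ ≃ S₂ :=
      (Equiv.sigmaFiberEquiv fs₁).symm.trans
        ((Equiv.sigmaCongrRight g).trans (Equiv.sigmaFiberEquiv fs₂))
    have hψ : ∀ x : S₁, sizeQ (ψ x).1 = sizeQ x.1 := by
      intro x
      have hx : ψ x = (g (fs₁ x) ⟨x, rfl⟩).1 := rfl
      have h2 := (g (fs₁ x) ⟨x, rfl⟩).2
      rw [hx]
      exact congrArg Fin.val h2
    have hψ' : ∀ y : S₂, sizeQ (ψ.symm y).1 = sizeQ y.1 := by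
      intro y
      have h := hψ (ψ.symm y)
      rw [ψ.apply_symm_apply] at h
      exact h.symm
    let Ψ : {s : Multiset S₁ // (s.map (fun x => sizeQ x.1)).sum = n - 1}
        ≃ {s : Multiset S₂ // (s.map (fun x => sizeQ x.1)).sum = n - 1} := by
      refine ⟨fun s => ⟨s.1.map ψ, ?_⟩, fun s => ⟨s.1.map ψ.symm, ?_⟩, ?_, ?_⟩
      · rw [Multiset.map_map]
        simp only [Function.comp_def]
        rw [Multiset.map_congr rfl (fun x _ => hψ x)]
        exact s.2
      · rw [Multiset.map_map]
        simp only [Function.comp_def]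
        rw [Multiset.map_congr rfl (fun y _ => hψ' y)]
        exact s.2
      · intro s
        apply Subtype.ext
        simp [Multiset.map_map]
      · intro s
        apply Subtype.ext
        simp [Multiset.map_map]
    exact Nat.card_congr ((childEquiv L₁ n hn').trans (Ψ.trans (childEquiv L₂ n hn').symm))

lemma card_avoid_eq (L₁ L₂ : RTree) (hsz : L₁.size = L₂.size) :
    ∀ n, Nat.card {q : Q // sizeQ q = n ∧ avoidQ L₁ q}
      = Nat.card {q : Q // sizeQ q = n ∧ avoidQ L₂ q} := by
  intro n
  induction n using Nat.strong_induction_on with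
  | _ n IH =>
    have hc1 := card_avoid_step L₁ n
    have hc2 := card_avoid_step L₂ n
    have hc3 := card_children_eq L₁ L₂ n IH
    rw [hsz] at hc1
    by_cases h : n = L₂.size
    · rw [if_pos h] at hc1 hc2; omega
    · rw [if_neg h] at hc1 hc2; omega


/-- If `L₁` and `L₂` are two distinct rooted trees with `ℓ` vertices, then for every
`n` the number of `n`-vertex rooted trees (up to isomorphism) without `L₁` as a
maximal limb equals the number of `n`-vertex rooted trees without `L₂` as a maximal
limb. -/
theorem stmt19 (ℓ n : ℕ) (L₁ L₂ : RTree) (h1 : L₁.size = ℓ) (h2 : L₂.size = ℓ)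
    (hne : ¬ RTree.Iso L₁ L₂) :
    Nat.card (Quot (fun a b : {t : RTree // t.size = n ∧ ¬ HasMaxLimb t L₁} =>
      RTree.Iso a.1 b.1)) =
    Nat.card (Quot (fun a b : {t : RTree // t.size = n ∧ ¬ HasMaxLimb t L₂} =>
      RTree.Iso a.1 b.1)) := by
  have key : ∀ (L : RTree), Nat.card (Quot (fun a b : {t : RTree // t.size = n ∧ ¬ HasMaxLimb t L} =>
      RTree.Iso a.1 b.1)) = Nat.card {q : Q // sizeQ q = n ∧ avoidQ L q} := by
    intro L
    refine Nat.card_congr (Equiv.ofBijective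
      (Quot.lift (fun a => (⟨⟦a.1⟧, a.2.1, a.2.2⟩ : {q : Q // sizeQ q = n ∧ avoidQ L q})) ?_)
      ⟨?_, ?_⟩)
    · intro a b h
      exact Subtype.ext (Quotient.sound h)
    · intro x y
      induction x using Quot.ind with | _ a =>
      induction y using Quot.ind with | _ b =>
      intro h
      have hv := congrArg Subtype.val h
      exact Quot.sound (Quotient.exact hv)
    · rintro ⟨q, hq1, hq2⟩
      induction q using Quotient.ind with | _ t =>
      exact ⟨Quot.mk _ ⟨t, hq1, hq2⟩, rfl⟩
  rw [key L₁, key L₂, card_avoid_eq L₁ L₂ (by rw [h1, h2]) n]
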